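/- Let θ > 1 and let R : ℕ → [0, ∞) satisfy lim_{n→∞} R(n)/n^θ = 0. Assume that for every ε > 0 and every δ > 0 there exists n₀ ∈ ℕ such that R(n) ≤ ε·n + δ·R(5n) for all n ≥ n₀. Then lim_{n→∞} R(n)/n = 0. -/

import Mathlib

open Filter

/-- Peres' bootstrap scheme (proof of Lemma 6.10 (pisolino)): if `R : ℕ → [0,∞)`
satisfies the a priori bound `R(n) = o(n^θ)` for some `θ > 1` and the recursion
`R(n) ≤ ε n + δ R(5n)` (for all `ε, δ > 0` and all large `n`), then `R(n) = o(n)`. -/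
theorem peres_bootstrap (θ : ℝ) (hθ : 1 < θ) (R : ℕ → ℝ) (hR : ∀ n, 0 ≤ R n)
    (hpoly : Tendsto (fun n : ℕ => R n / (n : ℝ) ^ θ) atTop (nhds 0))
    (hrec : ∀ ε : ℝ, 0 < ε → ∀ δ : ℝ, 0 < δ →
      ∃ n₀ : ℕ, ∀ n : ℕ, n₀ ≤ n → R n ≤ ε * n + δ * R (5 * n)) :
    Tendsto (fun n : ℕ => R n / (n : ℝ)) atTop (nhds 0) := by
  rw [Metric.tendsto_atTop]
  intro ε hε
  obtain ⟨δ, hδdef⟩ : ∃ δ : ℝ, δ = (1/2) * (5:ℝ)^(-θ) := ⟨_, rfl⟩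
  have h5pos : (0:ℝ) < 5 := by norm_num
  have h5θ : (0:ℝ) < (5:ℝ)^θ := Real.rpow_pos_of_pos h5pos θ
  have h5negθ : (0:ℝ) < (5:ℝ)^(-θ) := Real.rpow_pos_of_pos h5pos (-θ)
  have hδpos : 0 < δ := by rw [hδdef]; positivity
  have hδ5 : δ * (5:ℝ)^θ = 1/2 := by
    rw [hδdef, Real.rpow_neg (le_of_lt h5pos)]
    field_simp
  have h5δ : 5 * δ < 1/2 := by
    have h1 : (5:ℝ)^(-θ) < (5:ℝ)^(-(1:ℝ)) := by
      apply Real.rpow_lt_rpow_of_exponent_lt (by norm_num)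
      linarith
    have h51 : (5:ℝ)^(-(1:ℝ)) = 1/5 := by
      rw [Real.rpow_neg_one]; norm_num
    rw [hδdef]; rw [h51] at h1; linarith
  obtain ⟨n₀, hn₀⟩ := hrec (ε/4) (by linarith) δ hδpos
  rw [Metric.tendsto_atTop] at hpoly
  obtain ⟨M, hM⟩ := hpoly 1 one_pos
  refine ⟨max n₀ (max M 1), fun n hn => ?_⟩
  have hn1 : 1 ≤ n := le_trans (le_trans (le_max_right M 1) (le_max_right _ _)) hn
  have hnn₀ : n₀ ≤ n := le_trans (le_max_left _ _) hn
  have hnM : M ≤ n := le_trans (le_trans (le_max_left M 1) (le_max_right _ _)) hn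
  have hnpos : (0:ℝ) < n := by exact_mod_cast hn1
  -- polynomial bound for m ≥ n
  have hpb : ∀ m : ℕ, n ≤ m → R m ≤ (m:ℝ)^θ := by
    intro m hm
    have hmpos : (0:ℝ) < m := lt_of_lt_of_le hnpos (by exact_mod_cast hm)
    have hmθ : (0:ℝ) < (m:ℝ)^θ := Real.rpow_pos_of_pos hmpos θ
    have h1 := hM m (le_trans hnM hm)
    rw [Real.dist_eq, sub_zero, abs_of_nonneg (div_nonneg (hR m) (le_of_lt hmθ))] at h1
    exact le_of_lt ((div_lt_one hmθ).mp h1)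
  -- the iterated recursion
  have ind : ∀ k : ℕ, R n ≤ (ε/4) * n * (∑ i ∈ Finset.range k, (5*δ)^i)
      + δ^k * R (5^k * n) := by
    intro k
    induction k with
    | zero => simp
    | succ k ih =>
      have hmk : n₀ ≤ 5^k * n :=
        le_trans hnn₀ (Nat.le_mul_of_pos_left n (Nat.pow_pos (by norm_num)))
      have hrec' := hn₀ (5^k * n) hmk
      have h55 : 5 * (5^k * n) = 5^(k+1) * n := by ring
      rw [h55] at hrec'
      have hcast : ((5^k * n : ℕ) : ℝ) = 5^k * n := by push_cast; ring
      have hδk : (0:ℝ) ≤ δ^k := le_of_lt (pow_pos hδpos k)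
      have h2 : δ^k * R (5^k * n) ≤ δ^k * ((ε/4) * ((5^k * n : ℕ):ℝ) + δ * R (5^(k+1) * n)) :=
        mul_le_mul_of_nonneg_left hrec' hδk
      rw [hcast] at h2
      have h3 : δ^k * ((ε/4) * ((5:ℝ)^k * n) + δ * R (5^(k+1) * n))
          = (ε/4) * n * (5*δ)^k + δ^(k+1) * R (5^(k+1) * n) := by
        rw [mul_pow]; ring
      rw [h3] at h2
      have hsum : (∑ i ∈ Finset.range (k+1), (5*δ)^i)
          = (∑ i ∈ Finset.range k, (5*δ)^i) + (5*δ)^k := Finset.sum_range_succ _ _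
      rw [hsum]
      linarith
  -- bound on the geometric sum
  have hgs : ∀ k : ℕ, (∑ i ∈ Finset.range k, (5*δ)^i) ≤ 2 := by
    intro k
    have hne : (5*δ) ≠ 1 := by linarith
    rw [geom_sum_eq hne]
    rw [div_le_iff_of_neg (by linarith : 5*δ - 1 < 0)]
    have : (0:ℝ) ≤ (5*δ)^k := le_of_lt (pow_pos (by linarith) k)
    nlinarith
  -- bound on the tail term
  have htail : ∀ k : ℕ, δ^k * R (5^k * n) ≤ (1/2)^k * (n:ℝ)^θ := by
    intro k
    have hnm : n ≤ 5^k * n := Nat.le_mul_of_pos_left n (Nat.pow_pos (by norm_num))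
    have h1 : R (5^k * n) ≤ ((5^k * n : ℕ):ℝ)^θ := hpb _ hnm
    have hcast : ((5^k * n : ℕ) : ℝ) = (5:ℝ)^k * n := by push_cast; ring
    rw [hcast] at h1
    have h2 : ((5:ℝ)^k * n)^θ = ((5:ℝ)^k)^θ * (n:ℝ)^θ :=
      Real.mul_rpow (by positivity) (le_of_lt hnpos)
    have h3 : ((5:ℝ)^k)^θ = ((5:ℝ)^θ)^k := by
      rw [← Real.rpow_natCast (5:ℝ) k, ← Real.rpow_natCast ((5:ℝ)^θ) k,
        ← Real.rpow_mul (le_of_lt h5pos), ← Real.rpow_mul (le_of_lt h5pos), mul_comm]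
    have hδk : (0:ℝ) ≤ δ^k := le_of_lt (pow_pos hδpos k)
    calc δ^k * R (5^k * n) ≤ δ^k * (((5:ℝ)^k * n)^θ) := mul_le_mul_of_nonneg_left h1 hδk
      _ = (δ * (5:ℝ)^θ)^k * (n:ℝ)^θ := by rw [h2, h3, mul_pow]; ring
      _ = (1/2)^k * (n:ℝ)^θ := by rw [hδ5]
  -- take k → ∞
  have hbound : ∀ k : ℕ, R n ≤ (ε/4) * n * 2 + (1/2)^k * (n:ℝ)^θ := by
    intro k
    have := ind k
    have h1 := hgs k
    have h2 := htail k
    have hε4 : 0 ≤ (ε/4) * n := by positivity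
    nlinarith
  have hlim : Tendsto (fun k : ℕ => (ε/4) * n * 2 + (1/2)^k * (n:ℝ)^θ) atTop
      (nhds ((ε/4) * n * 2 + 0 * (n:ℝ)^θ)) := by
    exact tendsto_const_nhds.add
      ((tendsto_pow_atTop_nhds_zero_of_lt_one (by norm_num) (by norm_num)).mul_const _)
  have hfinal : R n ≤ (ε/4) * n * 2 + 0 * (n:ℝ)^θ := ge_of_tendsto' hlim hbound
  rw [zero_mul, add_zero] at hfinal
  rw [Real.dist_eq, sub_zero, abs_of_nonneg (div_nonneg (hR n) (le_of_lt hnpos))]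
  rw [div_lt_iff₀ hnpos]
  nlinarith
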